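/- arXiv:2110.06743 — 5 statements merged into one kernel-verified Lean document; each statement's English description precedes it below -/
import Mathlib

section
/- Let T be a non-surjective linear isometry of a complex Banach space X. Then the spectrum of T equals the full closed unit disk 𝔻 = {λ ∈ ℂ : |λ| ≤ 1}. -/
lemma key_lower {X : Type*} [NormedAddCommGroup X] [NormedSpace ℂ X]
    (T : X →L[ℂ] X) (hiso : ∀ x : X, ‖T x‖ = ‖x‖) (μ : ℂ) (x : X) :
    (1 - ‖μ‖) * ‖x‖ ≤ ‖(algebraMap ℂ (X →L[ℂ] X) μ - T) x‖ := by
  have h1 : (algebraMap ℂ (X →L[ℂ] X) μ - T) x = μ • x - T x := by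
    simp [Algebra.algebraMap_eq_smul_one]
  rw [h1]
  calc (1 - ‖μ‖) * ‖x‖ = ‖T x‖ - ‖μ • x‖ := by
        rw [hiso, norm_smul]; ring
    _ ≤ ‖T x - μ • x‖ := norm_sub_norm_le _ _
    _ = ‖μ • x - T x‖ := norm_sub_rev _ _

lemma key_step {X : Type*} [NormedAddCommGroup X] [NormedSpace ℂ X] [CompleteSpace X]
    (T : X →L[ℂ] X) (hiso : ∀ x : X, ‖T x‖ = ‖x‖) {μ ν : ℂ} (hμ : ‖μ‖ < 1)
    (hμρ : μ ∉ spectrum ℂ T) (hd : ‖ν - μ‖ < 1 - ‖μ‖) : ν ∉ spectrum ℂ T := by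
  rw [spectrum.mem_iff, not_not] at hμρ ⊢
  obtain ⟨u, hu⟩ := hμρ
  set v : X →L[ℂ] X := ↑u⁻¹ with hv
  have huv : (↑u : X →L[ℂ] X) * v = 1 := u.mul_inv
  have hpos : (0:ℝ) < 1 - ‖μ‖ := by linarith
  have hvnorm : ‖v‖ ≤ (1 - ‖μ‖)⁻¹ := by
    apply ContinuousLinearMap.opNorm_le_bound _ (by positivity)
    intro y
    have heq : (↑u : X →L[ℂ] X) (v y) = y := by
      have := congrArg (fun S : X →L[ℂ] X => S y) huv
      simpa using this
    have h2 : (1 - ‖μ‖) * ‖v y‖ ≤ ‖y‖ := by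
      have := key_lower T hiso μ (v y)
      rw [← hu, heq] at this
      exact this
    rw [inv_mul_eq_div, le_div_iff₀ hpos]
    linarith [h2]
  set w : X →L[ℂ] X := (ν - μ) • v with hw
  have hwnorm : ‖w‖ < 1 := by
    have : ‖w‖ ≤ ‖ν - μ‖ * (1 - ‖μ‖)⁻¹ :=
      le_trans (ContinuousLinearMap.opNorm_smul_le _ _) (mul_le_mul_of_nonneg_left hvnorm (norm_nonneg _))
    calc ‖w‖ ≤ ‖ν - μ‖ * (1 - ‖μ‖)⁻¹ := this
      _ < (1 - ‖μ‖) * (1 - ‖μ‖)⁻¹ := by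
          exact mul_lt_mul_of_pos_right hd (by positivity)
      _ = 1 := mul_inv_cancel₀ (ne_of_gt hpos)
  have hunit1 : IsUnit ((1 : X →L[ℂ] X) + w) := by
    have := (Units.oneSub (-w) (by simpa using hwnorm)).isUnit
    simpa [sub_neg_eq_add] using this
  have hfactor : algebraMap ℂ (X →L[ℂ] X) ν - T = ↑u * (1 + w) := by
    rw [mul_add, mul_one, hw, mul_smul_comm, huv, hu]
    simp [Algebra.algebraMap_eq_smul_one, sub_smul]
  rw [hfactor]
  exact u.isUnit.mul hunit1

/-- The spectrum of a non-surjective linear isometry of a complex Banach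
space is the full closed unit disk. -/
theorem stmt_5 {X : Type*} [NormedAddCommGroup X] [NormedSpace ℂ X] [CompleteSpace X]
    [Nontrivial X] (T : X →L[ℂ] X)
    (hiso : ∀ x : X, ‖T x‖ = ‖x‖) (hsurj : ¬ Function.Surjective T) :
    spectrum ℂ T = Metric.closedBall (0 : ℂ) 1 := by
  have hTnorm : ‖T‖ ≤ 1 := by
    apply ContinuousLinearMap.opNorm_le_bound _ zero_le_one
    intro x; rw [hiso, one_mul]
  have h0 : (0:ℂ) ∈ spectrum ℂ T := by
    rw [spectrum.mem_iff]
    intro h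
    simp only [map_zero, zero_sub] at h
    have h' : IsUnit T := by simpa using h.neg
    obtain ⟨u, hu⟩ := h'
    apply hsurj
    intro y
    refine ⟨(↑u⁻¹ : X →L[ℂ] X) y, ?_⟩
    have := congrArg (fun S : X →L[ℂ] X => S y) u.mul_inv
    rw [hu] at this
    simpa using this
  apply Set.Subset.antisymm
  · intro ν hν
    rw [Metric.mem_closedBall, dist_zero_right]
    exact le_trans (spectrum.norm_le_norm_of_mem hν) hTnorm
  · have hball : Metric.ball (0:ℂ) 1 ⊆ spectrum ℂ T := by
      by_contra hc
      obtain ⟨μ₀, hμ₀b, hμ₀s⟩ := Set.not_subset.mp hc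
      have hopen : IsOpen (spectrum ℂ T ∩ Metric.ball (0:ℂ) 1) := by
        rw [Metric.isOpen_iff]
        rintro ν ⟨hνs, hνb⟩
        rw [Metric.mem_ball, dist_zero_right] at hνb
        refine ⟨(1 - ‖ν‖)/2, by linarith, ?_⟩
        intro μ hμ
        rw [Metric.mem_ball, dist_eq_norm] at hμ
        have hμn : ‖μ‖ < 1 := by
          calc ‖μ‖ ≤ ‖ν‖ + ‖μ - ν‖ := by
                have := norm_add_le ν (μ - ν); simpa using this
            _ < ‖ν‖ + (1 - ‖ν‖)/2 := by linarith
            _ < 1 := by linarith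
        constructor
        · by_contra hμs
          refine absurd ?_ (not_not.mpr hνs)
          apply key_step T hiso hμn hμs
          have : ‖ν - μ‖ = ‖μ - ν‖ := norm_sub_rev _ _
          rw [this]
          have : ‖μ‖ < ‖ν‖ + (1 - ‖ν‖)/2 := by
            calc ‖μ‖ ≤ ‖ν‖ + ‖μ - ν‖ := by
                  have := norm_add_le ν (μ - ν); simpa using this
              _ < ‖ν‖ + (1 - ‖ν‖)/2 := by linarith
          linarith
        · rw [Metric.mem_ball, dist_zero_right]; exact hμn
      have hopen2 : IsOpen (spectrum ℂ T)ᶜ := (spectrum.isClosed T).isOpen_compl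
      have hpc : IsPreconnected (Metric.ball (0:ℂ) 1) :=
        (convex_ball (0:ℂ) 1).isPreconnected
      have hcover : Metric.ball (0:ℂ) 1 ⊆ (spectrum ℂ T ∩ Metric.ball (0:ℂ) 1) ∪ (spectrum ℂ T)ᶜ := by
        intro ν hν
        by_cases h : ν ∈ spectrum ℂ T
        · exact Or.inl ⟨h, hν⟩
        · exact Or.inr h
      have h1 : (Metric.ball (0:ℂ) 1 ∩ (spectrum ℂ T ∩ Metric.ball (0:ℂ) 1)).Nonempty := by
        refine ⟨0, ?_, h0, ?_⟩ <;> simpa using one_pos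
      have h2 : (Metric.ball (0:ℂ) 1 ∩ (spectrum ℂ T)ᶜ).Nonempty := ⟨μ₀, hμ₀b, hμ₀s⟩
      obtain ⟨z, _, ⟨hz1, _⟩, hz2⟩ := hpc _ _ hopen hopen2 hcover h1 h2
      exact hz2 hz1
    calc Metric.closedBall (0:ℂ) 1 = closure (Metric.ball (0:ℂ) 1) :=
          (closure_ball (0:ℂ) one_ne_zero).symm
      _ ⊆ closure (spectrum ℂ T) := closure_mono hball
      _ = spectrum ℂ T := ((spectrum.isClosed T).closure_eq)
end

section
/- Let Φ be an injective *-endomorphism of a C*-algebra A. Then either Φ is surjective (hence a *-automorphism) and σ(Φ) ⊂ 𝕋, or Φ is not surjective and σ(Φ) = 𝔻, the full closed unit disk. -/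
/-- For an injective *-endomorphism `Φ` of a C*-algebra `A`, either `Φ` is
surjective and `σ(Φ) ⊆ 𝕋`, or `Φ` is not surjective and `σ(Φ) = 𝔻`. -/
theorem stmt_6 {A : Type*} [NormedRing A] [StarRing A] [CStarRing A] [NormedAlgebra ℂ A]
    [CompleteSpace A] [StarModule ℂ A] [Nontrivial A]
    (Φ : A →L[ℂ] A)
    (hmul : ∀ a b : A, Φ (a * b) = Φ a * Φ b)
    (hstar : ∀ a : A, Φ (star a) = star (Φ a))
    (hinj : Function.Injective Φ) :
    (Function.Surjective Φ → spectrum ℂ Φ ⊆ Metric.sphere (0 : ℂ) 1) ∧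
    (¬ Function.Surjective Φ → spectrum ℂ Φ = Metric.closedBall (0 : ℂ) 1) := by
  letI : CStarAlgebra A := ⟨⟩
  -- Φ is isometric
  let φ : A →⋆ₙₐ[ℂ] A :=
    { toFun := Φ, map_smul' := fun c x => Φ.map_smul c x, map_zero' := Φ.map_zero,
      map_add' := Φ.map_add, map_mul' := hmul, map_star' := hstar }
  have hiso : ∀ a : A, ‖Φ a‖ = ‖a‖ := fun a => NonUnitalStarAlgHom.norm_map φ hinj a
  set S : ℂ → (A →L[ℂ] A) := fun μ => algebraMap ℂ (A →L[ℂ] A) μ - Φ with hS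
  have hSapp : ∀ (μ : ℂ) (x : A), S μ x = μ • x - Φ x := by
    intro μ x
    simp [hS, Algebra.algebraMap_eq_smul_one, ContinuousLinearMap.sub_apply,
      ContinuousLinearMap.smul_apply, ContinuousLinearMap.one_apply]
  -- lower bound for S μ
  have hb : ∀ (μ : ℂ) (x : A), (1 - ‖μ‖) * ‖x‖ ≤ ‖S μ x‖ := by
    intro μ x
    have h1 : ‖Φ x‖ - ‖μ • x‖ ≤ ‖Φ x - μ • x‖ := norm_sub_norm_le _ _
    rw [hSapp, norm_sub_rev]
    calc (1 - ‖μ‖) * ‖x‖ = ‖x‖ - ‖μ‖ * ‖x‖ := by ring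
      _ = ‖Φ x‖ - ‖μ • x‖ := by rw [hiso x, norm_smul]
      _ ≤ ‖Φ x - μ • x‖ := h1
  -- inverse norm bound
  have hub : ∀ (μ : ℂ), ‖μ‖ < 1 → ∀ u : (A →L[ℂ] A)ˣ, (u : A →L[ℂ] A) = S μ →
      ‖((u⁻¹ : (A →L[ℂ] A)ˣ) : A →L[ℂ] A)‖ ≤ (1 - ‖μ‖)⁻¹ := by
    intro μ hμ u hu
    have hc : (0 : ℝ) < 1 - ‖μ‖ := by linarith
    refine ContinuousLinearMap.opNorm_le_bound _ (by positivity) fun y => ?_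
    have h1 : (1 - ‖μ‖) * ‖((u⁻¹ : (A →L[ℂ] A)ˣ) : A →L[ℂ] A) y‖
        ≤ ‖S μ (((u⁻¹ : (A →L[ℂ] A)ˣ) : A →L[ℂ] A) y)‖ := hb _ _
    have h2 : S μ (((u⁻¹ : (A →L[ℂ] A)ˣ) : A →L[ℂ] A) y) = y := by
      calc S μ (((u⁻¹ : (A →L[ℂ] A)ˣ) : A →L[ℂ] A) y)
          = ((u : A →L[ℂ] A) * ((u⁻¹ : (A →L[ℂ] A)ˣ) : A →L[ℂ] A)) y := by rw [hu]; rfl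
        _ = y := by rw [u.mul_inv]; rfl
    rw [h2, mul_comm] at h1
    rw [inv_mul_eq_div, le_div_iff₀ hc]
    exact h1
  -- spectrum inside closed unit ball
  have hΦnorm : ‖Φ‖ ≤ 1 := Φ.opNorm_le_bound zero_le_one fun x => by rw [hiso x, one_mul]
  have hball : spectrum ℂ Φ ⊆ Metric.closedBall (0 : ℂ) 1 :=
    (spectrum.subset_closedBall_norm Φ).trans (Metric.closedBall_subset_closedBall hΦnorm)
  constructor
  · -- surjective case
    intro hsurj z hz
    let e := ContinuousLinearEquiv.ofBijective Φ (LinearMap.ker_eq_bot.mpr hinj)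
      (LinearMap.range_eq_top.mpr hsurj)
    have hu : IsUnit Φ := by
      refine ⟨⟨Φ, (e.symm : A →L[ℂ] A), ?_, ?_⟩, rfl⟩
      · ext y; exact e.apply_symm_apply y
      · ext y; exact e.symm_apply_apply y
    obtain ⟨u, hu'⟩ := hu
    have hz1 : ‖z‖ ≤ 1 := by simpa using hball hz
    have hzne : z ≠ 0 := by
      rintro rfl
      exact (spectrum.zero_mem_iff ℂ).mp hz ⟨u, hu'⟩
    -- inverse of Φ is isometric, so has norm ≤ 1
    have hinvnorm : ‖((u⁻¹ : (A →L[ℂ] A)ˣ) : A →L[ℂ] A)‖ ≤ 1 := by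
      refine ContinuousLinearMap.opNorm_le_bound _ zero_le_one fun y => ?_
      rw [one_mul]
      calc ‖((u⁻¹ : (A →L[ℂ] A)ˣ) : A →L[ℂ] A) y‖
          = ‖Φ (((u⁻¹ : (A →L[ℂ] A)ˣ) : A →L[ℂ] A) y)‖ := (hiso _).symm
        _ = ‖((u : A →L[ℂ] A) * ((u⁻¹ : (A →L[ℂ] A)ˣ) : A →L[ℂ] A)) y‖ := by rw [hu']; rfl
        _ = ‖y‖ := by rw [u.mul_inv]; rfl
        _ ≤ ‖y‖ := le_rfl
    -- z⁻¹ is in the spectrum of u⁻¹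
    have hzinv : (z⁻¹ : ℂ) ∈ spectrum ℂ ((u⁻¹ : (A →L[ℂ] A)ˣ) : A →L[ℂ] A) := by
      lift z to ℂˣ using hzne.isUnit with w hw
      rw [← Units.val_inv_eq_inv_val]
      rw [← hu'] at hz
      exact spectrum.inv_mem_iff.mp hz
    have h2 : ‖(z⁻¹ : ℂ)‖ ≤ 1 := (spectrum.norm_le_norm_of_mem hzinv).trans hinvnorm
    have hzpos : 0 < ‖z‖ := norm_pos_iff.mpr hzne
    rw [norm_inv] at h2
    rw [mem_sphere_zero_iff_norm]
    nlinarith [mul_le_mul_of_nonneg_right h2 (le_of_lt hzpos),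
      inv_mul_cancel₀ hzpos.ne']
  · -- non-surjective case
    intro hns
    refine subset_antisymm hball ?_
    -- it suffices that the open ball is inside the spectrum
    have hkey : Metric.ball (0 : ℂ) 1 ⊆ spectrum ℂ Φ := by
      by_contra hcon
      rw [Set.not_subset] at hcon
      obtain ⟨μ₀, hμ₀b, hμ₀s⟩ := hcon
      -- 0 is in the spectrum since Φ is not surjective
      have h0 : (0 : ℂ) ∈ spectrum ℂ Φ := by
        rw [spectrum.zero_mem_iff]
        rintro ⟨u, hu⟩
        refine hns fun y => ⟨((u⁻¹ : (A →L[ℂ] A)ˣ) : A →L[ℂ] A) y, ?_⟩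
        calc Φ (((u⁻¹ : (A →L[ℂ] A)ˣ) : A →L[ℂ] A) y)
            = ((u : A →L[ℂ] A) * ((u⁻¹ : (A →L[ℂ] A)ˣ) : A →L[ℂ] A)) y := by rw [hu]; rfl
          _ = y := by rw [u.mul_inv]; rfl
      -- points of the spectrum in the open ball are interior points of the spectrum
      have hint : Metric.ball (0 : ℂ) 1 ∩ spectrum ℂ Φ ⊆ interior (spectrum ℂ Φ) := by
        rintro lam ⟨hlb, hls⟩
        rw [mem_ball_zero_iff] at hlb
        set ε := (1 - ‖lam‖) / 2 with hε
        have hεpos : 0 < ε := by rw [hε]; linarith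
        rw [mem_interior]
        refine ⟨Metric.ball lam ε, ?_, Metric.isOpen_ball, Metric.mem_ball_self hεpos⟩
        intro μ hμ
        rw [Metric.mem_ball, dist_eq_norm] at hμ
        have htri : ‖μ‖ ≤ ‖lam‖ + ‖μ - lam‖ := by
          calc ‖μ‖ = ‖lam + (μ - lam)‖ := by ring_nf
            _ ≤ ‖lam‖ + ‖μ - lam‖ := norm_add_le _ _
        have hμb : ‖μ‖ < 1 := by rw [hε] at hμ; linarith
        by_contra hμs
        rw [spectrum.mem_iff, not_not] at hμs
        obtain ⟨u, hu⟩ := hμs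
        have hlmu : ‖lam - μ‖ < 1 - ‖μ‖ := by
          rw [norm_sub_rev]
          rw [hε] at hμ; linarith
        have huinv : ‖((u⁻¹ : (A →L[ℂ] A)ˣ) : A →L[ℂ] A)‖ ≤ (1 - ‖μ‖)⁻¹ := hub μ hμb u hu
        have hupos : 0 < ‖((u⁻¹ : (A →L[ℂ] A)ˣ) : A →L[ℂ] A)‖ := Units.norm_pos u⁻¹
        have hcpos : (0 : ℝ) < 1 - ‖μ‖ := by
          have := norm_nonneg (lam - μ); linarith
        have hkey2 : ‖algebraMap ℂ (A →L[ℂ] A) (lam - μ)‖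
            < ‖((u⁻¹ : (A →L[ℂ] A)ˣ) : A →L[ℂ] A)‖⁻¹ := by
          rw [norm_algebraMap']
          have h4 : (1 - ‖μ‖) ≤ ‖((u⁻¹ : (A →L[ℂ] A)ˣ) : A →L[ℂ] A)‖⁻¹ := by
            rw [le_inv_comm₀ hcpos hupos]
            exact huinv
          linarith
        have hunit : IsUnit (S lam) := by
          have h5 := (u.add (algebraMap ℂ (A →L[ℂ] A) (lam - μ)) hkey2).isUnit
          rw [Units.val_add, hu] at h5
          have heq : S μ + algebraMap ℂ (A →L[ℂ] A) (lam - μ) = S lam := by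
            rw [hS]; simp only [map_sub]; abel
          rwa [heq] at h5
        exact (spectrum.mem_iff.mp hls) hunit
      -- connectivity argument
      have hpre : IsPreconnected (Metric.ball (0 : ℂ) 1) :=
        (convex_ball (0 : ℂ) 1).isPreconnected
      have hcover : Metric.ball (0 : ℂ) 1 ⊆ (spectrum ℂ Φ)ᶜ ∪ interior (spectrum ℂ Φ) := by
        intro x hx
        by_cases hxs : x ∈ spectrum ℂ Φ
        · exact Or.inr (hint ⟨hx, hxs⟩)
        · exact Or.inl hxs
      have hne1 : (Metric.ball (0 : ℂ) 1 ∩ (spectrum ℂ Φ)ᶜ).Nonempty := ⟨μ₀, hμ₀b, hμ₀s⟩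
      have hne2 : (Metric.ball (0 : ℂ) 1 ∩ interior (spectrum ℂ Φ)).Nonempty :=
        ⟨0, Metric.mem_ball_self one_pos, hint ⟨Metric.mem_ball_self one_pos, h0⟩⟩
      obtain ⟨x, -, hx1, hx2⟩ := hpre _ _ (spectrum.isClosed Φ).isOpen_compl
        isOpen_interior hcover hne1 hne2
      exact hx1 (interior_subset hx2)
    calc Metric.closedBall (0 : ℂ) 1 = closure (Metric.ball (0 : ℂ) 1) :=
          (closure_ball (0 : ℂ) one_ne_zero).symm
      _ ⊆ closure (spectrum ℂ Φ) := closure_mono hkey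
      _ = spectrum ℂ Φ := (spectrum.isClosed Φ).closure_eq
end

section
/- Let A be a nonzero simple C*-algebra and Φ a nonzero *-endomorphism of A. Then Φ is injective, and σ(Φ) = 𝔻 if and only if Φ is not surjective, while σ(Φ) ⊂ 𝕋 if and only if Φ is surjective. -/
open ContinuousLinearMap in
/-- Perturbation lemma: a unit bounded below by `c` stays a unit under perturbation of
norm `< c`. -/
lemma aux_pert {R : Type*} [NormedRing R] [CompleteSpace R] [Nontrivial R] {x y : R} {c : ℝ}
    (_hc : 0 < c) (u : Rˣ) (hu : (u : R) = x) (hxinv : ‖(↑u⁻¹ : R)‖ ≤ c⁻¹)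
    (hxy : ‖y - x‖ < c) : IsUnit y := by
  have h2 : c ≤ ‖(↑u⁻¹ : R)‖⁻¹ := by
    calc c = (c⁻¹)⁻¹ := (inv_inv c).symm
    _ ≤ ‖(↑u⁻¹ : R)‖⁻¹ := inv_anti₀ (Units.norm_pos u⁻¹) hxinv
  exact (Units.ofNearby u y (hu ▸ lt_of_lt_of_le hxy h2)).isUnit

/-- A nonzero *-endomorphism of a nonzero simple C*-algebra is injective,
its spectrum is the closed unit disk iff it is not surjective, and its spectrum is
contained in the unit circle iff it is surjective. -/
theorem stmt_7 {A : Type*} [NormedRing A] [StarRing A] [CStarRing A] [NormedAlgebra ℂ A]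
    [CompleteSpace A] [StarModule ℂ A] [Nontrivial A]
    (hsimple : ∀ I : TwoSidedIdeal A, IsClosed (I : Set A) → I = ⊥ ∨ I = ⊤)
    (Φ : A →L[ℂ] A)
    (hmul : ∀ a b : A, Φ (a * b) = Φ a * Φ b)
    (hstar : ∀ a : A, Φ (star a) = star (Φ a))
    (hne : Φ ≠ 0) :
    Function.Injective Φ ∧
    (spectrum ℂ Φ = Metric.closedBall (0 : ℂ) 1 ↔ ¬ Function.Surjective Φ) ∧
    (spectrum ℂ Φ ⊆ Metric.sphere (0 : ℂ) 1 ↔ Function.Surjective Φ) := by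
  letI : CStarAlgebra A :=
    { ‹NormedRing A›, ‹StarRing A›, ‹CStarRing A›, ‹NormedAlgebra ℂ A›, ‹StarModule ℂ A›,
      ‹CompleteSpace A› with }
  -- Step 1: injectivity
  have hinj : Function.Injective Φ := by
    set I : TwoSidedIdeal A := TwoSidedIdeal.mk' (Φ ⁻¹' {0})
      (by simp) (fun {x y} hx hy => by simp_all [map_add])
      (fun {x} hx => by simp_all [map_neg])
      (fun {x y} hy => by simp_all [hmul x y])
      (fun {x y} hx => by simp_all [hmul x y]) with hI
    have hIcoe : (I : Set A) = Φ ⁻¹' {0} := TwoSidedIdeal.coe_mk' _ _ _ _ _ _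
    have hclosed : IsClosed (I : Set A) := by
      rw [hIcoe]; exact (isClosed_singleton).preimage Φ.continuous
    rcases hsimple I hclosed with hbot | htop
    · intro a b hab
      have : a - b ∈ I := by
        rw [hI, TwoSidedIdeal.mem_mk']
        simp [map_sub, hab]
      rw [hbot, TwoSidedIdeal.mem_bot] at this
      exact sub_eq_zero.mp this
    · exfalso; apply hne
      ext x
      have : x ∈ I := by rw [htop]; exact TwoSidedIdeal.mem_top A
      rw [hI, TwoSidedIdeal.mem_mk'] at this
      simpa using this
  -- Step 2: Φ is isometric
  have hiso : ∀ a : A, ‖Φ a‖ = ‖a‖ := by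
    let φ : A →⋆ₙₐ[ℂ] A :=
      { toFun := Φ, map_smul' := Φ.map_smul, map_add' := Φ.map_add, map_zero' := Φ.map_zero,
        map_mul' := hmul, map_star' := hstar }
    exact NonUnitalStarAlgHom.norm_map φ hinj
  have hnorm : ‖Φ‖ ≤ 1 := Φ.opNorm_le_bound zero_le_one (fun x => by rw [hiso, one_mul])
  -- basic facts
  have happly : ∀ (μ : ℂ) (x : A), (algebraMap ℂ (A →L[ℂ] A) μ - Φ) x = μ • x - Φ x := by
    intro μ x
    simp [Algebra.algebraMap_eq_smul_one, ContinuousLinearMap.smul_apply]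
  have hbb : ∀ (μ : ℂ) (x : A), (1 - ‖μ‖) * ‖x‖ ≤ ‖(algebraMap ℂ (A →L[ℂ] A) μ - Φ) x‖ := by
    intro μ x
    rw [happly]
    calc (1 - ‖μ‖) * ‖x‖ = ‖Φ x‖ - ‖μ • x‖ := by
          rw [hiso, norm_smul]; ring
    _ ≤ ‖Φ x - μ • x‖ := norm_sub_norm_le _ _
    _ = ‖μ • x - Φ x‖ := norm_sub_rev _ _
  -- inverse norm bound for resolvents in the ball
  have hinv : ∀ (μ : ℂ), ‖μ‖ < 1 → ∀ u : (A →L[ℂ] A)ˣ,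
      (u : A →L[ℂ] A) = algebraMap ℂ (A →L[ℂ] A) μ - Φ →
      ‖(↑u⁻¹ : A →L[ℂ] A)‖ ≤ (1 - ‖μ‖)⁻¹ := by
    intro μ hμ u hu
    have hc : (0:ℝ) < 1 - ‖μ‖ := by linarith
    apply ContinuousLinearMap.opNorm_le_bound _ (by positivity)
    intro y
    have h1 : (1 - ‖μ‖) * ‖(↑u⁻¹ : A →L[ℂ] A) y‖ ≤ ‖y‖ := by
      have := hbb μ ((↑u⁻¹ : A →L[ℂ] A) y)
      rw [← hu] at this
      calc (1 - ‖μ‖) * ‖(↑u⁻¹ : A →L[ℂ] A) y‖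
          ≤ ‖(u : A →L[ℂ] A) ((↑u⁻¹ : A →L[ℂ] A) y)‖ := this
      _ = ‖((u : A →L[ℂ] A) * (↑u⁻¹ : A →L[ℂ] A)) y‖ := by
            rw [ContinuousLinearMap.mul_apply]
      _ = ‖y‖ := by rw [u.mul_inv]; simp
    rw [inv_mul_eq_div, le_div_iff₀ hc, mul_comm]
    exact h1
  -- perturbation: resolvent set is "locally stable" in the open ball
  have hpert : ∀ (μ lam : ℂ), ‖μ‖ < 1 → ‖lam - μ‖ < 1 - ‖μ‖ →
      IsUnit (algebraMap ℂ (A →L[ℂ] A) μ - Φ) → IsUnit (algebraMap ℂ (A →L[ℂ] A) lam - Φ) := by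
    intro μ lam hμ hlam hU
    obtain ⟨u, hu⟩ := hU
    refine aux_pert (by linarith : (0:ℝ) < 1 - ‖μ‖) u hu (hinv μ hμ u hu) ?_
    have : (algebraMap ℂ (A →L[ℂ] A) lam - Φ) - (algebraMap ℂ (A →L[ℂ] A) μ - Φ)
        = algebraMap ℂ (A →L[ℂ] A) (lam - μ) := by
      rw [map_sub]; abel
    rw [this, norm_algebraMap']
    exact hlam
  -- unit iff bijective
  have hunit_surj : IsUnit (Φ : A →L[ℂ] A) → Function.Surjective Φ := by
    rintro ⟨u, hu⟩ x
    refine ⟨(↑u⁻¹ : A →L[ℂ] A) x, ?_⟩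
    have : ((u : A →L[ℂ] A) * (↑u⁻¹ : A →L[ℂ] A)) x = x := by rw [u.mul_inv]; simp
    rwa [ContinuousLinearMap.mul_apply, hu] at this
  have hsurj_unit : Function.Surjective Φ → IsUnit (Φ : A →L[ℂ] A) := by
    intro hsurj
    let e := ContinuousLinearEquiv.ofBijective Φ
      (LinearMap.ker_eq_bot.mpr hinj) (LinearMap.range_eq_top.mpr hsurj)
    refine ⟨⟨Φ, (e.symm : A →L[ℂ] A), ?_, ?_⟩, rfl⟩
    · ext x
      simp only [ContinuousLinearMap.mul_apply, ContinuousLinearMap.one_apply,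
        ContinuousLinearMap.coe_coe]
      have := e.apply_symm_apply x
      rwa [show ∀ y, e y = Φ y from fun y => rfl] at this
    · ext x
      simp only [ContinuousLinearMap.mul_apply, ContinuousLinearMap.one_apply,
        ContinuousLinearMap.coe_coe]
      have := e.symm_apply_apply x
      rwa [show ∀ y, e y = Φ y from fun y => rfl] at this
  -- surjective → spectrum in sphere
  have hS : Function.Surjective Φ → spectrum ℂ Φ ⊆ Metric.sphere (0:ℂ) 1 := by
    intro hsurj lam hlam
    have hle : ‖lam‖ ≤ 1 := le_trans (spectrum.norm_le_norm_of_mem hlam) hnorm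
    have hΦu : IsUnit (Φ : A →L[ℂ] A) := hsurj_unit hsurj
    obtain ⟨u, hu⟩ := hΦu
    have hlam0 : lam ≠ 0 := by
      intro h
      rw [h] at hlam
      exact (spectrum.zero_notMem_iff ℂ).mpr ⟨u, hu⟩ hlam
    -- inverse is also isometric, so ‖u⁻¹‖ ≤ 1
    have hinvnorm : ‖(↑u⁻¹ : A →L[ℂ] A)‖ ≤ 1 := by
      apply ContinuousLinearMap.opNorm_le_bound _ zero_le_one
      intro y
      rw [one_mul]
      apply le_of_eq
      calc ‖(↑u⁻¹ : A →L[ℂ] A) y‖ = ‖Φ ((↑u⁻¹ : A →L[ℂ] A) y)‖ := (hiso _).symm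
      _ = ‖((u : A →L[ℂ] A) * (↑u⁻¹ : A →L[ℂ] A)) y‖ := by
            rw [ContinuousLinearMap.mul_apply, hu]
      _ = ‖y‖ := by rw [u.mul_inv]; simp
    have hmem : (↑(Units.mk0 lam hlam0)⁻¹ : ℂ) ∈ spectrum ℂ (↑u⁻¹ : A →L[ℂ] A) := by
      rw [← spectrum.inv_mem_iff]
      simpa [hu] using hlam
    have : ‖lam⁻¹‖ ≤ 1 := le_trans (spectrum.norm_le_norm_of_mem hmem) hinvnorm
    have h1 : 1 ≤ ‖lam‖ := by
      rw [norm_inv] at this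
      rw [← inv_inv ‖lam‖]
      calc (1:ℝ) = 1⁻¹ := by norm_num
      _ ≤ (‖lam‖⁻¹)⁻¹ := inv_anti₀ (inv_pos.mpr (norm_pos_iff.mpr hlam0)) this
    simp only [Metric.mem_sphere, dist_zero_right]
    linarith
  -- not surjective → closed ball ⊆ spectrum
  have hN : ¬ Function.Surjective Φ → Metric.closedBall (0:ℂ) 1 ⊆ spectrum ℂ Φ := by
    intro hnsurj
    have hball : Metric.ball (0:ℂ) 1 ⊆ spectrum ℂ Φ := by
      by_contra hcon
      rw [Set.not_subset] at hcon
      obtain ⟨μ₀, hμ₀ball, hμ₀⟩ := hcon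
      rw [spectrum.notMem_iff] at hμ₀
      set U : Set ℂ := {μ | ‖μ‖ < 1 ∧ IsUnit (algebraMap ℂ (A →L[ℂ] A) μ - Φ)} with hU
      set V : Set ℂ := {μ | ‖μ‖ < 1 ∧ ¬ IsUnit (algebraMap ℂ (A →L[ℂ] A) μ - Φ)} with hV
      have hUopen : IsOpen U := by
        rw [Metric.isOpen_iff]
        intro μ hμ
        refine ⟨1 - ‖μ‖, by linarith [hμ.1], fun lam hlam => ?_⟩
        rw [Metric.mem_ball, dist_eq_norm] at hlam
        refine ⟨?_, hpert μ lam hμ.1 hlam hμ.2⟩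
        calc ‖lam‖ ≤ ‖lam - μ‖ + ‖μ‖ := by
              simpa using norm_add_le (lam - μ) μ
        _ < (1 - ‖μ‖) + ‖μ‖ := by linarith
        _ = 1 := by ring
      have hVopen : IsOpen V := by
        rw [Metric.isOpen_iff]
        intro μ hμ
        refine ⟨(1 - ‖μ‖)/2, by linarith [hμ.1], fun lam hlam => ?_⟩
        rw [Metric.mem_ball, dist_eq_norm] at hlam
        have hlamlt : ‖lam‖ < 1 := by
          calc ‖lam‖ ≤ ‖lam - μ‖ + ‖μ‖ := by simpa using norm_add_le (lam - μ) μ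
          _ < (1 - ‖μ‖)/2 + ‖μ‖ := by linarith
          _ ≤ 1 := by linarith [hμ.1]
        refine ⟨hlamlt, fun hu => hμ.2 ?_⟩
        apply hpert lam μ hlamlt _ hu
        have : ‖μ - lam‖ < (1 - ‖μ‖)/2 := by rwa [norm_sub_rev]
        calc ‖μ - lam‖ < (1 - ‖μ‖)/2 := this
        _ ≤ 1 - ‖lam‖ := by
          have : ‖lam‖ ≤ ‖lam - μ‖ + ‖μ‖ := by simpa using norm_add_le (lam - μ) μ
          linarith
      have hconn : IsPreconnected (Metric.ball (0:ℂ) 1) :=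
        (convex_ball (0:ℂ) 1).isPreconnected
      have hcover : Metric.ball (0:ℂ) 1 ⊆ U ∪ V := by
        intro μ hμ
        rw [Metric.mem_ball, dist_zero_right] at hμ
        by_cases h : IsUnit (algebraMap ℂ (A →L[ℂ] A) μ - Φ)
        · exact Or.inl ⟨hμ, h⟩
        · exact Or.inr ⟨hμ, h⟩
      have hUne : (Metric.ball (0:ℂ) 1 ∩ U).Nonempty := by
        refine ⟨μ₀, hμ₀ball, ?_, hμ₀⟩
        rwa [Metric.mem_ball, dist_zero_right] at hμ₀ball
      have hVne : (Metric.ball (0:ℂ) 1 ∩ V).Nonempty := by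
        refine ⟨0, by simp, by simp, ?_⟩
        intro hu
        apply hnsurj
        apply hunit_surj
        have h2 : -(algebraMap ℂ (A →L[ℂ] A) (0:ℂ) - Φ) = Φ := by simp
        exact h2 ▸ hu.neg
      obtain ⟨z, _, hzU, hzV⟩ := hconn U V hUopen hVopen hcover hUne hVne
      exact hzV.2 hzU.2
    calc Metric.closedBall (0:ℂ) 1 = closure (Metric.ball (0:ℂ) 1) :=
          (closure_ball (0:ℂ) one_ne_zero).symm
    _ ⊆ spectrum ℂ Φ := closure_minimal hball (spectrum.isClosed Φ)
  -- assemble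
  refine ⟨hinj, ⟨?_, ?_⟩, ⟨?_, hS⟩⟩
  · intro heq hsurj
    have h0 : (0:ℂ) ∈ spectrum ℂ Φ := by rw [heq]; simp
    have := hS hsurj h0
    simp at this
  · intro hnsurj
    refine Set.Subset.antisymm ?_ (hN hnsurj)
    intro lam hlam
    simpa [Metric.mem_closedBall, dist_zero_right] using
      le_trans (spectrum.norm_le_norm_of_mem hlam) hnorm
  · intro hsub
    apply hunit_surj
    rw [← spectrum.zero_notMem_iff ℂ]
    intro h0
    have := hsub h0
    simp at this
end

section
/- Let A be a finite-dimensional C*-algebra and Φ : A → A a *-endomorphism (not necessarily unital). Then the spectrum of Φ, as a linear operator on A, is contained in {0} ∪ 𝕋. -/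
/-- The spectrum of a (not necessarily unital) *-endomorphism of a
finite-dimensional C*-algebra is contained in `{0} ∪ 𝕋`. -/
theorem stmt_8 {A : Type*} [NormedRing A] [StarRing A] [CStarRing A] [NormedAlgebra ℂ A]
    [StarModule ℂ A] [FiniteDimensional ℂ A]
    (Φ : A →L[ℂ] A)
    (hmul : ∀ a b : A, Φ (a * b) = Φ a * Φ b)
    (hstar : ∀ a : A, Φ (star a) = star (Φ a)) :
    spectrum ℂ Φ ⊆ {(0 : ℂ)} ∪ Metric.sphere (0 : ℂ) 1 := by
  intro lam hlam
  by_contra hmem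
  simp only [Set.mem_union, Set.mem_singleton_iff, mem_sphere_iff_norm, sub_zero,
    not_or] at hmem
  obtain ⟨hne0, hns⟩ := hmem
  -- transfer to the linear endomorphism
  set e := Module.End.toContinuousLinearMap (𝕜 := ℂ) A with he
  set f : Module.End ℂ A := e.symm Φ with hf
  have hfeq : ∀ x, f x = Φ x := fun x => rfl
  have hspec : lam ∈ spectrum ℂ f := by
    have := AlgEquiv.spectrum_eq e f
    rw [hf, ← this]; exact hlam
  have heig : f.HasEigenvalue lam := Module.End.hasEigenvalue_iff_mem_spectrum.mpr hspec
  obtain ⟨b, hb⟩ := heig.exists_hasEigenvector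
  have hbval : Φ b = lam • b := by rw [← hfeq]; exact hb.apply_eq_smul
  have hbne : b ≠ 0 := hb.right
  -- the positive element c = b* b is an eigenvector for μ = conj lam * lam
  set c : A := star b * b with hc
  set μ : ℂ := (starRingEnd ℂ) lam * lam with hμ
  have hcval : Φ c = μ • c := by
    rw [hc, hmul, hstar, hbval, star_smul, smul_mul_smul_comm]
    rfl
  have hcne : c ≠ 0 := by
    intro h
    apply hbne
    have : ‖star b * b‖ = 0 := by rw [← hc, h, norm_zero]
    rw [CStarRing.norm_star_mul_self] at this
    have := mul_self_eq_zero.mp this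
    exact norm_eq_zero.mp this
  have hcsa : IsSelfAdjoint c := by
    rw [hc]; exact IsSelfAdjoint.star_mul_self b
  -- powers of c are nonzero
  have hcpow_ne : ∀ n : ℕ, c ^ (n + 1) ≠ 0 := by
    intro n h
    have h2 : c ^ (2 ^ (n + 1)) = 0 := by
      have hle : n + 1 ≤ 2 ^ (n + 1) := (Nat.lt_two_pow_self (n := n+1)).le
      calc c ^ (2 ^ (n + 1)) = c ^ (n + 1) * c ^ (2 ^ (n + 1) - (n + 1)) := by
            rw [← pow_add]; congr 1; omega
        _ = 0 := by rw [h, zero_mul]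
    have := hcsa.nnnorm_pow_two_pow (n + 1)
    rw [h2, nnnorm_zero, eq_comm, pow_eq_zero_iff (by positivity)] at this
    exact hcne (by simpa using this)
  -- eigenvector identities for powers
  have hpow : ∀ n : ℕ, Φ (c ^ (n + 1)) = μ ^ (n + 1) • c ^ (n + 1) := by
    intro n
    induction n with
    | zero => simpa using hcval
    | succ k ih =>
      rw [pow_succ, hmul, ih, hcval, smul_mul_smul_comm, ← pow_succ, ← pow_succ]
  -- norms of μ
  have hμnorm : ‖μ‖ = ‖lam‖ * ‖lam‖ := by
    rw [hμ, norm_mul, RCLike.norm_conj]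
  have hμpos : 0 < ‖μ‖ := by
    rw [hμnorm]
    have : ‖lam‖ ≠ 0 := fun h => hne0 (norm_eq_zero.mp h)
    positivity
  have hμne1 : ‖μ‖ ≠ 1 := by
    rw [hμnorm]
    intro h
    exact hns (by nlinarith [norm_nonneg lam])
  -- the map n ↦ μ^(n+1) is injective
  have hinj : Function.Injective (fun n : ℕ => μ ^ (n + 1)) := by
    intro a b hab
    simp only at hab
    have : ‖μ‖ ^ (a + 1) = ‖μ‖ ^ (b + 1) := by
      rw [← norm_pow, ← norm_pow, hab]
    have hlog : Real.log ‖μ‖ ≠ 0 := by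
      intro h
      rcases Real.log_eq_zero.mp h with h | h | h
      · exact hμpos.ne' h
      · exact hμne1 h
      · linarith
    have h3 : ((a : ℝ) + 1) * Real.log ‖μ‖ = ((b : ℝ) + 1) * Real.log ‖μ‖ := by
      have h4 := congrArg Real.log this
      rw [Real.log_pow, Real.log_pow] at h4
      push_cast at h4
      exact h4
    have h5 : (a : ℝ) + 1 = (b : ℝ) + 1 := mul_right_cancel₀ hlog h3
    have : (a : ℝ) = b := by linarith
    exact_mod_cast this
  -- infinitely many eigenvalues: contradiction with finite dimensionality
  have hli : LinearIndependent ℂ (fun n : ℕ => c ^ (n + 1)) := by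
    apply f.eigenvectors_linearIndependent' (fun n : ℕ => μ ^ (n + 1)) hinj
    intro n
    refine ⟨?_, hcpow_ne n⟩
    rw [Module.End.mem_eigenspace_iff, hfeq]
    exact hpow n
  exact Module.Finite.not_linearIndependent_of_infinite (fun n : ℕ => c ^ (n + 1)) hli
end

section
/- Let A be a finite-dimensional C*-algebra and Φ : A → A a completely positive unital map. Then there is a strictly increasing sequence (n_j) of natural numbers such that Φ^{n_j} converges in norm to the spectral projection P onto the direct sum of the eigenspaces of Φ for peripheral eigenvalues. Consequently P is a unital completely positive projection. -/
open Filter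

/-- A bounded linear map on a C*-algebra is completely positive if its entrywise
application maps positive matrices (those of the form `Nᴴ * N`) to positive matrices,
for every matrix size. -/
def IsCompletelyPositive {A : Type*} [NormedRing A] [StarRing A] [NormedAlgebra ℂ A]
    (Φ : A →L[ℂ] A) : Prop :=
  ∀ (n : ℕ) (M : Matrix (Fin n) (Fin n) A),
    (∃ N : Matrix (Fin n) (Fin n) A, M = N.conjTranspose * N) →
    ∃ N' : Matrix (Fin n) (Fin n) A, M.map (fun a => Φ a) = N'.conjTranspose * N'

/-! ### Auxiliary lemmas -/

section Torus

/-- Simultaneous recurrence for finitely many points on the unit circle. -/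
lemma torus_subseq (S : Finset ℂ) (hS : ∀ l ∈ S, ‖l‖ = 1) :
    ∃ nj : ℕ → ℕ, StrictMono nj ∧ ∀ l ∈ S, Filter.Tendsto (fun j => l ^ nj j) atTop (nhds 1) := by
  have key : ∀ ε : ℝ, 0 < ε → ∀ N : ℕ, ∃ n : ℕ, N < n ∧ ∀ l ∈ S, ‖l ^ n - 1‖ < ε := by
    intro ε hε N
    set v : ℕ → ({l // l ∈ S} → ℂ) := fun n l => (l : ℂ) ^ n with hv
    have hmem : ∀ n, v n ∈ Metric.closedBall (0 : {l // l ∈ S} → ℂ) 1 := by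
      intro n
      rw [Metric.mem_closedBall, dist_zero_right]
      refine pi_norm_le_iff_of_nonneg zero_le_one |>.mpr fun l => ?_
      rw [norm_pow, hS l l.2, one_pow]
    obtain ⟨a, -, φ, hφ, hconv⟩ :=
      tendsto_subseq_of_bounded Metric.isBounded_closedBall hmem
    have hc := hconv.cauchySeq
    rw [Metric.cauchySeq_iff] at hc
    obtain ⟨K, hK⟩ := hc ε hε
    set k := max K (φ K + N + 1) with hk
    have h1 : K ≤ k := le_max_left _ _
    have h2 : φ K + N + 1 ≤ φ k := le_trans (le_max_right _ _) (hφ.le_apply)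
    refine ⟨φ k - φ K, by omega, fun l hl => ?_⟩
    have hnorm : ‖(l : ℂ) ^ (φ K)‖ = 1 := by rw [norm_pow, hS l hl, one_pow]
    have hsplit : l ^ (φ K) * (l ^ (φ k - φ K) - 1) = l ^ (φ k) - l ^ (φ K) := by
      rw [mul_sub, mul_one, ← pow_add]
      congr 2
      omega
    have : ‖l ^ (φ k - φ K) - 1‖ = ‖l ^ (φ k) - l ^ (φ K)‖ := by
      rw [← hsplit, norm_mul, hnorm, one_mul]
    rw [this]
    calc ‖l ^ (φ k) - l ^ (φ K)‖ = dist (v (φ k) ⟨l, hl⟩) (v (φ K) ⟨l, hl⟩) := by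
          rw [dist_eq_norm]
      _ ≤ dist (v (φ k)) (v (φ K)) := dist_le_pi_dist _ _ _
      _ < ε := hK k h1 K le_rfl
  choose g hg1 hg2 using key
  set nj : ℕ → ℕ := fun j => Nat.rec (g 1 one_pos 0)
    (fun j ih => g (1 / (j + 2)) (by positivity) ih) j with hnj
  have hsucc : ∀ j, nj (j + 1) = g (1 / (j + 2)) (by positivity) (nj j) := fun j => rfl
  have hmono : StrictMono nj := by
    apply strictMono_nat_of_lt_succ
    intro j
    rw [hsucc]
    exact hg1 _ _ _
  refine ⟨nj, hmono, fun l hl => ?_⟩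
  rw [Metric.tendsto_atTop]
  intro ε hε
  obtain ⟨m, hm⟩ := exists_nat_gt (1 / ε)
  refine ⟨m + 1, fun j hj => ?_⟩
  obtain ⟨t, rfl⟩ : ∃ t, j = t + 1 := ⟨j - 1, by omega⟩
  have ht : m ≤ t := by omega
  rw [dist_eq_norm]
  have hb := hg2 (1 / (t + 2)) (by positivity) (nj t) l hl
  rw [← hsucc] at hb
  refine hb.trans_le ?_
  rw [div_le_iff₀ (by positivity)]
  rw [div_lt_iff₀ hε] at hm
  nlinarith [hε.le, hm, (by positivity : (0:ℝ) < (t:ℝ) + 2), ht,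
    (by exact_mod_cast ht : (m:ℝ) ≤ t)]

end Torus

section LinAlg
variable {V : Type*} [NormedAddCommGroup V] [NormedSpace ℂ V]

/-- Peripheral generalized eigenvectors are genuine eigenvectors, under power-boundedness. -/
lemma peripheral_maxGen_eq_eigen (f : Module.End ℂ V)
    (hb : ∀ (n : ℕ) (x : V), ‖(f ^ n) x‖ ≤ 6 * ‖x‖) {μ : ℂ} (hμ : ‖μ‖ = 1) :
    f.maxGenEigenspace μ = f.eigenspace μ := by
  set N : Module.End ℂ V := f - μ • 1 with hN
  have claim2 : ∀ x : V, N (N x) = 0 → N x = 0 := by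
    intro x hx
    set y := N x with hy
    have hfy : f y = μ • y := by
      have : N y = 0 := hx
      rw [hN] at this
      simpa [LinearMap.sub_apply, sub_eq_zero] using this
    have hfx : f x = μ • x + y := by
      have : N x = y := rfl
      rw [hN] at this
      simp only [LinearMap.sub_apply, LinearMap.smul_apply, Module.End.one_apply] at this
      linear_combination (norm := module) this
    have key : ∀ n : ℕ, (f ^ (n + 1)) x = μ ^ (n + 1) • x + ((n + 1 : ℕ) : ℂ) • μ ^ n • y := by
      intro n
      induction n with
      | zero => simpa using hfx
      | succ n ih =>
        have h0 : (f ^ (n + 2)) x = f ((f ^ (n + 1)) x) := by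
          rw [pow_succ']
          rfl
        rw [h0, ih, map_add, map_smul, map_smul, map_smul, hfx, hfy]
        push_cast
        match_scalars <;> ring
    by_contra hy0
    have hypos : 0 < ‖y‖ := norm_pos_iff.mpr hy0
    have bound : ∀ n : ℕ, ((n + 1 : ℕ) : ℝ) * ‖y‖ ≤ 7 * ‖x‖ := by
      intro n
      have h1 : ((n+1:ℕ) : ℂ) • μ ^ n • y = (f ^ (n + 1)) x - μ ^ (n + 1) • x := by
        rw [key n]; abel
      have h3 : ‖(f ^ (n + 1)) x - μ ^ (n + 1) • x‖ ≤ 6 * ‖x‖ + ‖x‖ := by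
        refine (norm_sub_le _ _).trans ?_
        gcongr
        · exact hb (n+1) x
        · rw [norm_smul, norm_pow, hμ, one_pow, one_mul]
      calc ((n+1:ℕ) : ℝ) * ‖y‖ = ‖((n+1:ℕ) : ℂ) • μ ^ n • y‖ := by
            rw [norm_smul, norm_smul, norm_pow, hμ, one_pow, one_mul, Complex.norm_natCast]
        _ = ‖(f ^ (n + 1)) x - μ ^ (n + 1) • x‖ := by rw [h1]
        _ ≤ 7 * ‖x‖ := by linarith
    obtain ⟨m, hm⟩ := exists_nat_gt (7 * ‖x‖ / ‖y‖)
    have h4 : 7 * ‖x‖ < (m : ℝ) * ‖y‖ := by rwa [div_lt_iff₀ hypos] at hm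
    have h5 : (m : ℝ) * ‖y‖ ≤ ((m + 1 : ℕ) : ℝ) * ‖y‖ := by push_cast; nlinarith
    linarith [bound m]
  have claimk : ∀ (k : ℕ) (x : V), (N ^ k) x = 0 → N x = 0 := by
    intro k
    induction k with
    | zero =>
      intro x hx
      simp only [pow_zero, Module.End.one_apply] at hx
      rw [hx, map_zero]
    | succ k ih =>
      intro x hx
      have h1 : (N ^ k) (N x) = 0 := by
        rw [← Module.End.mul_apply, ← pow_succ]
        exact hx
      exact claim2 x (ih (N x) h1)
  apply le_antisymm
  · intro x hx
    rw [Module.End.mem_maxGenEigenspace] at hx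
    obtain ⟨k, hk⟩ := hx
    rw [Module.End.mem_eigenspace_iff]
    have := claimk k x (by rw [hN]; exact hk)
    rw [hN] at this
    simp only [LinearMap.sub_apply, LinearMap.smul_apply, Module.End.one_apply, sub_eq_zero] at this
    exact this
  · intro x hx
    rw [Module.End.mem_eigenspace_iff] at hx
    rw [Module.End.mem_maxGenEigenspace]
    refine ⟨1, ?_⟩
    simp only [pow_one, LinearMap.sub_apply, LinearMap.smul_apply, Module.End.one_apply, hx,
      sub_self]

/-- Any eigenvalue of a power-bounded operator lies in the closed unit disc. -/
lemma eigenvalue_norm_le (f : Module.End ℂ V)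
    (hb : ∀ (n : ℕ) (x : V), ‖(f ^ n) x‖ ≤ 6 * ‖x‖) {μ : ℂ} (hμ : f.HasEigenvalue μ) :
    ‖μ‖ ≤ 1 := by
  by_contra hlt
  push_neg at hlt
  obtain ⟨x, hx⟩ := hμ.exists_hasEigenvector
  have hxpos : 0 < ‖x‖ := norm_pos_iff.mpr hx.right
  obtain ⟨n, hn⟩ := pow_unbounded_of_one_lt (6 : ℝ) hlt
  have h1 : ‖(f ^ n) x‖ = ‖μ‖ ^ n * ‖x‖ := by
    rw [hx.pow_apply, norm_smul, norm_pow]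
  have := hb n x
  rw [h1] at this
  nlinarith

/-- On a generalized eigenspace with eigenvalue inside the open unit disc,
the powers of the operator tend to zero. -/
lemma maxGen_decay (f : Module.End ℂ V) {μ : ℂ} (hμ : ‖μ‖ < 1) {x : V}
    (hx : x ∈ f.maxGenEigenspace μ) :
    Filter.Tendsto (fun n => (f ^ n) x) atTop (nhds 0) := by
  rw [Module.End.mem_maxGenEigenspace] at hx
  obtain ⟨k, hk⟩ := hx
  set N : Module.End ℂ V := f - μ • 1 with hN
  have hcomm : Commute N (μ • (1 : Module.End ℂ V)) := (Commute.one_right N).smul_right μ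
  have hdecomp : f = N + μ • 1 := by rw [hN]; abel
  have expand : ∀ n : ℕ, k ≤ n → (f ^ n) x =
      ∑ m ∈ Finset.range k, (n.choose m : ℂ) • μ ^ (n - m) • (N ^ m) x := by
    intro n hn
    have hbin : f ^ n = ∑ m ∈ Finset.range (n + 1),
        N ^ m * (μ • (1 : Module.End ℂ V)) ^ (n - m) * (n.choose m : Module.End ℂ V) := by
      rw [hdecomp]
      exact Commute.add_pow hcomm n
    have happ : ∀ m, (N ^ m * (μ • (1 : Module.End ℂ V)) ^ (n - m)
        * (n.choose m : Module.End ℂ V)) x = (n.choose m : ℂ) • μ ^ (n - m) • (N ^ m) x := by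
      intro m
      simp only [Module.End.mul_apply, Module.End.natCast_apply, smul_pow, one_pow,
        LinearMap.smul_apply, Module.End.one_apply, map_nsmul, map_smul]
      module
    rw [hbin, LinearMap.sum_apply]
    rw [Finset.sum_congr rfl (fun m _ => happ m)]
    symm
    apply Finset.sum_subset
    · exact Finset.range_subset_range.mpr (by omega)
    · intro m hm1 hm2
      have hmk : k ≤ m := by
        simp only [Finset.mem_range, not_lt] at hm2
        exact hm2
      have : (N ^ m) x = 0 := by
        obtain ⟨t, rfl⟩ := Nat.exists_eq_add_of_le hmk
        rw [add_comm, pow_add, Module.End.mul_apply, hk, map_zero]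
      rw [this, smul_zero, smul_zero]
  have hterm : ∀ m : ℕ, Filter.Tendsto (fun n => (n.choose m : ℂ) • μ ^ (n - m) • (N ^ m) x)
      atTop (nhds (0 : V)) := by
    intro m
    by_cases hμ0 : μ = 0
    · apply tendsto_nhds_of_eventually_eq
      filter_upwards [eventually_ge_atTop (m + 1)] with n hn
      rw [hμ0, zero_pow (by omega), zero_smul, smul_zero]
    · have hμpos : 0 < ‖μ‖ := norm_pos_iff.mpr hμ0
      have hbnd : ∀ᶠ n in atTop, ‖(n.choose m : ℂ) • μ ^ (n - m) • (N ^ m) x‖ ≤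
          ((n : ℝ) ^ m * ‖μ‖ ^ n) * ((‖μ‖⁻¹) ^ m * ‖(N ^ m) x‖) := by
        filter_upwards [eventually_ge_atTop m] with n hn
        rw [norm_smul, norm_smul, norm_pow]
        have h1 : ‖(n.choose m : ℂ)‖ = (n.choose m : ℝ) := by
          rw [Complex.norm_natCast]
        rw [h1]
        have h2 : (n.choose m : ℝ) ≤ (n : ℝ) ^ m := by
          exact_mod_cast Nat.choose_le_pow n m
        have h3 : ‖μ‖ ^ (n - m) = ‖μ‖ ^ n * (‖μ‖⁻¹) ^ m := by
          rw [pow_sub₀ _ (ne_of_gt hμpos) hn, ← inv_pow]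
        rw [h3]
        calc (n.choose m : ℝ) * (‖μ‖ ^ n * ‖μ‖⁻¹ ^ m * ‖(N ^ m) x‖)
            ≤ (n : ℝ) ^ m * (‖μ‖ ^ n * ‖μ‖⁻¹ ^ m * ‖(N ^ m) x‖) := by
              gcongr
          _ = (n : ℝ) ^ m * ‖μ‖ ^ n * (‖μ‖⁻¹ ^ m * ‖(N ^ m) x‖) := by ring
      have hlim : Filter.Tendsto (fun n : ℕ => ((n : ℝ) ^ m * ‖μ‖ ^ n) *
          ((‖μ‖⁻¹) ^ m * ‖(N ^ m) x‖)) atTop (nhds 0) := by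
        have := tendsto_pow_const_mul_const_pow_of_lt_one m (norm_nonneg μ) hμ
        simpa using this.mul_const ((‖μ‖⁻¹) ^ m * ‖(N ^ m) x‖)
      exact squeeze_zero_norm' hbnd hlim
  have hsum : Filter.Tendsto (fun n => ∑ m ∈ Finset.range k,
      (n.choose m : ℂ) • μ ^ (n - m) • (N ^ m) x) atTop (nhds 0) := by
    have := tendsto_finset_sum (Finset.range k) (fun m (_ : m ∈ Finset.range k) => hterm m)
    simpa using this
  apply hsum.congr'
  filter_upwards [eventually_ge_atTop k] with n hn
  exact (expand n hn).symm

end LinAlg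

section Helpers
variable {A : Type*} [NormedRing A] [StarRing A] [CStarRing A] [NormedAlgebra ℂ A]
    [StarModule ℂ A] [FiniteDimensional ℂ A]

@[reducible] noncomputable def myCSA : CStarAlgebra A :=
  { ‹NormedRing A›, ‹StarRing A›, ‹CStarRing A›, ‹NormedAlgebra ℂ A›, ‹StarModule ℂ A›,
    (FiniteDimensional.complete ℂ A : CompleteSpace A) with }
attribute [local instance] myCSA
@[reducible] noncomputable def myOrd : PartialOrder A := CStarAlgebra.spectralOrder A
attribute [local instance] myOrd
lemma mySOR : StarOrderedRing A := CStarAlgebra.spectralOrderedRing A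
attribute [local instance] mySOR

lemma cp_map_nonneg (Ψ : A →L[ℂ] A) (h : IsCompletelyPositive Ψ) {x : A} (hx : 0 ≤ x) :
    0 ≤ Ψ x := by
  rw [StarOrderedRing.nonneg_iff] at hx
  induction hx using AddSubmonoid.closure_induction with
  | mem y hy =>
    obtain ⟨s, rfl⟩ := hy
    obtain ⟨N', hN'⟩ := h 1 (Matrix.of ![![star s * s]]) ⟨Matrix.of ![![s]], by
      ext i j
      fin_cases i
      fin_cases j
      simp [Matrix.mul_apply, Fin.sum_univ_one]⟩
    have h00 : Ψ (star s * s) = star (N' 0 0) * (N' 0 0) := by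
      have := congrFun (congrFun hN' 0) 0
      simpa [Matrix.mul_apply, Fin.sum_univ_one, Matrix.map_apply] using this
    rw [h00]
    exact star_mul_self_nonneg _
  | zero => simp
  | add x y _ _ hx hy =>
    rw [map_add]
    exact add_nonneg hx hy

lemma norm_one_le_one' : ‖(1 : A)‖ ≤ 1 := by
  rcases subsingleton_or_nontrivial A with h | h
  · simp [Subsingleton.elim (1 : A) 0]
  · exact le_of_eq norm_one

lemma ucp_map_algebraMap (Ψ : A →L[ℂ] A) (h1 : Ψ 1 = 1) (r : ℝ) :
    Ψ (algebraMap ℝ A r) = algebraMap ℝ A r := by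
  rw [Algebra.algebraMap_eq_smul_one]
  calc Ψ (r • (1:A)) = r • Ψ 1 := (Ψ : A →ₗ[ℂ] A).map_smul_of_tower r 1
    _ = r • 1 := by rw [h1]

lemma norm_algebraMap_le' (r : ℝ) : ‖algebraMap ℝ A r‖ ≤ |r| := by
  rw [Algebra.algebraMap_eq_smul_one, norm_smul]
  calc ‖r‖ * ‖(1:A)‖ ≤ ‖r‖ * 1 := by
        gcongr
        exact norm_one_le_one'
    _ = |r| := by simp [Real.norm_eq_abs]

lemma ucp_norm_nonneg_le (Ψ : A →L[ℂ] A) (h : IsCompletelyPositive Ψ) (h1 : Ψ 1 = 1)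
    {p : A} (hp : 0 ≤ p) : ‖Ψ p‖ ≤ ‖p‖ := by
  have hpsa : IsSelfAdjoint p := IsSelfAdjoint.of_nonneg hp
  have hle : p ≤ algebraMap ℝ A ‖p‖ := hpsa.le_algebraMap_norm_self
  have h2 : Ψ p ≤ algebraMap ℝ A ‖p‖ := by
    have h0 : 0 ≤ Ψ (algebraMap ℝ A ‖p‖) - Ψ p := by
      rw [← map_sub]
      exact cp_map_nonneg Ψ h (sub_nonneg.mpr hle)
    have := sub_nonneg.mp h0
    rwa [ucp_map_algebraMap Ψ h1] at this
  calc ‖Ψ p‖ ≤ ‖algebraMap ℝ A ‖p‖‖ :=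
        CStarAlgebra.norm_le_norm_of_nonneg_of_le (cp_map_nonneg Ψ h hp) h2
    _ ≤ |‖p‖| := norm_algebraMap_le' _
    _ = ‖p‖ := abs_norm p

lemma ucp_norm_sa_le (Ψ : A →L[ℂ] A) (h : IsCompletelyPositive Ψ) (h1 : Ψ 1 = 1)
    {a : A} (ha : IsSelfAdjoint a) : ‖Ψ a‖ ≤ 3 * ‖a‖ := by
  have hp : 0 ≤ a + algebraMap ℝ A ‖a‖ :=
    neg_le_iff_add_nonneg.mp ha.neg_algebraMap_norm_le_self
  have key : Ψ a = Ψ (a + algebraMap ℝ A ‖a‖) - algebraMap ℝ A ‖a‖ := by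
    rw [map_add, ucp_map_algebraMap Ψ h1]
    abel
  rw [key]
  calc ‖Ψ (a + algebraMap ℝ A ‖a‖) - algebraMap ℝ A ‖a‖‖
      ≤ ‖Ψ (a + algebraMap ℝ A ‖a‖)‖ + ‖algebraMap ℝ A ‖a‖‖ := norm_sub_le _ _
    _ ≤ ‖a + algebraMap ℝ A ‖a‖‖ + |‖a‖| := by
        gcongr
        · exact ucp_norm_nonneg_le Ψ h h1 hp
        · exact norm_algebraMap_le' _
    _ ≤ (‖a‖ + |‖a‖|) + |‖a‖| := by
        gcongr
        calc ‖a + algebraMap ℝ A ‖a‖‖ ≤ ‖a‖ + ‖algebraMap ℝ A ‖a‖‖ := norm_add_le _ _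
          _ ≤ ‖a‖ + |‖a‖| := by
              gcongr
              exact norm_algebraMap_le' _
    _ = 3 * ‖a‖ := by rw [abs_norm]; ring

lemma ucp_norm_le (Ψ : A →L[ℂ] A) (h : IsCompletelyPositive Ψ) (h1 : Ψ 1 = 1)
    (a : A) : ‖Ψ a‖ ≤ 6 * ‖a‖ := by
  have hre : IsSelfAdjoint ((realPart a : A)) := (realPart a).2
  have him : IsSelfAdjoint ((imaginaryPart a : A)) := (imaginaryPart a).2
  have hdecomp : (realPart a : A) + Complex.I • (imaginaryPart a : A) = a :=
    realPart_add_I_smul_imaginaryPart a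
  have hnre : ‖(realPart a : A)‖ ≤ ‖a‖ := by
    rw [realPart_apply_coe]
    calc ‖(2⁻¹ : ℝ) • (a + star a)‖ = |(2⁻¹ : ℝ)| * ‖a + star a‖ := by
          rw [norm_smul, Real.norm_eq_abs]
    _ ≤ 2⁻¹ * (‖a‖ + ‖star a‖) := by
          rw [abs_of_nonneg (by norm_num : (0:ℝ) ≤ 2⁻¹)]
          gcongr
          exact norm_add_le _ _
    _ = ‖a‖ := by rw [norm_star]; ring
  have hnim : ‖(imaginaryPart a : A)‖ ≤ ‖a‖ := by
    rw [imaginaryPart_apply_coe]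
    rw [norm_smul, norm_smul, norm_neg, Complex.norm_I, one_mul]
    rw [Real.norm_eq_abs, abs_of_nonneg (by norm_num : (0:ℝ) ≤ (2:ℝ)⁻¹)]
    calc (2:ℝ)⁻¹ * ‖a - star a‖ ≤ 2⁻¹ * (‖a‖ + ‖star a‖) := by
          gcongr
          exact norm_sub_le _ _
      _ = ‖a‖ := by rw [norm_star]; ring
  have hΨa : Ψ a = Ψ (realPart a : A) + Complex.I • Ψ (imaginaryPart a : A) := by
    nth_rewrite 1 [← hdecomp]
    rw [map_add, map_smul]
  rw [hΨa]
  calc ‖Ψ (realPart a : A) + Complex.I • Ψ (imaginaryPart a : A)‖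
      ≤ ‖Ψ (realPart a : A)‖ + ‖Complex.I‖ * ‖Ψ (imaginaryPart a : A)‖ := by
        refine (norm_add_le _ _).trans ?_
        rw [norm_smul]
    _ ≤ 3 * ‖a‖ + 1 * (3 * ‖a‖) := by
        gcongr
        · exact (ucp_norm_sa_le Ψ h h1 hre).trans (by gcongr)
        · simp [Complex.norm_I]
        · exact (ucp_norm_sa_le Ψ h h1 him).trans (by gcongr)
    _ = 6 * ‖a‖ := by ring

lemma ucp_pow (Φ : A →L[ℂ] A) (h : IsCompletelyPositive Φ) (h1 : Φ 1 = 1) (n : ℕ) :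
    IsCompletelyPositive (Φ ^ n) ∧ (Φ ^ n) 1 = 1 := by
  induction n with
  | zero =>
    constructor
    · intro k M hM
      obtain ⟨N, rfl⟩ := hM
      exact ⟨N, by simp [Matrix.map_apply]⟩
    · simp
  | succ n ih =>
    have happ : ∀ a : A, (Φ ^ (n+1)) a = (Φ ^ n) (Φ a) := by
      intro a
      rw [pow_succ]
      rfl
    constructor
    · intro k M hM
      obtain ⟨N₁, hN₁⟩ := h k M hM
      obtain ⟨N₂, hN₂⟩ := ih.1 k (M.map (fun a => Φ a)) ⟨N₁, hN₁⟩
      refine ⟨N₂, ?_⟩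
      calc M.map (fun a => (Φ ^ (n+1)) a)
          = (M.map (fun a => Φ a)).map (fun a => (Φ ^ n) a) := by
            ext i j
            simp only [Matrix.map_map, Matrix.map_apply, Function.comp_apply]
            exact happ _
        _ = N₂.conjTranspose * N₂ := hN₂
    · rw [happ, h1, ih.2]

/-- In a finite-dimensional space, pointwise convergence of operators implies norm
convergence. -/
lemma clm_tendsto_of_ptwise (T : ℕ → A →L[ℂ] A) (P : A →L[ℂ] A)
    (h : ∀ x, Filter.Tendsto (fun j => T j x) atTop (nhds (P x))) :
    Filter.Tendsto T atTop (nhds P) := by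
  set b := Module.finBasis ℂ A with hb
  have hnorm : ∀ S : A →L[ℂ] A, ‖S‖ ≤
      ∑ i, ‖LinearMap.toContinuousLinearMap (b.coord i)‖ * ‖S (b i)‖ := by
    intro S
    apply ContinuousLinearMap.opNorm_le_bound
    · positivity
    intro x
    have hx : S x = ∑ i, b.repr x i • S (b i) := by
      conv_lhs => rw [← b.sum_repr x]
      rw [map_sum]
      simp [map_smul]
    rw [hx]
    refine (norm_sum_le _ _).trans ?_
    rw [Finset.sum_mul]
    apply Finset.sum_le_sum
    intro i _
    rw [norm_smul]
    have hcoord : ‖b.repr x i‖ ≤ ‖LinearMap.toContinuousLinearMap (b.coord i)‖ * ‖x‖ := by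
      have := (LinearMap.toContinuousLinearMap (b.coord i)).le_opNorm x
      simpa [Module.Basis.coord_apply] using this
    calc ‖b.repr x i‖ * ‖S (b i)‖
        ≤ (‖LinearMap.toContinuousLinearMap (b.coord i)‖ * ‖x‖) * ‖S (b i)‖ := by
          gcongr
      _ = ‖LinearMap.toContinuousLinearMap (b.coord i)‖ * ‖S (b i)‖ * ‖x‖ := by ring
  rw [tendsto_iff_norm_sub_tendsto_zero]
  have hup : ∀ j, ‖T j - P‖ ≤
      ∑ i, ‖LinearMap.toContinuousLinearMap (b.coord i)‖ * ‖(T j - P) (b i)‖ :=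
    fun j => hnorm (T j - P)
  have hlim : Filter.Tendsto (fun j => ∑ i,
      ‖LinearMap.toContinuousLinearMap (b.coord i)‖ * ‖(T j - P) (b i)‖) atTop (nhds 0) := by
    have hterm : ∀ i, Filter.Tendsto
        (fun j => ‖LinearMap.toContinuousLinearMap (b.coord i)‖ * ‖(T j - P) (b i)‖)
        atTop (nhds 0) := by
      intro i
      have h1 : Filter.Tendsto (fun j => T j (b i) - P (b i)) atTop (nhds 0) := by
        have := (h (b i)).sub tendsto_const_nhds (g := fun _ => P (b i))
        simpa using this
      have h2 : Filter.Tendsto (fun j => ‖(T j - P) (b i)‖) atTop (nhds 0) := by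
        have := h1.norm
        simpa [ContinuousLinearMap.sub_apply] using this
      have := h2.const_mul ‖LinearMap.toContinuousLinearMap (b.coord i)‖
      simpa using this
    have := tendsto_finset_sum Finset.univ (fun i (_ : i ∈ Finset.univ) => hterm i)
    simpa using this
  exact squeeze_zero (fun j => norm_nonneg _) hup hlim

lemma sum_sq_nonneg {n : ℕ} (d : Fin n → A) : 0 ≤ ∑ k, star (d k) * (d k) := by
  classical
  induction (Finset.univ : Finset (Fin n)) using Finset.induction with
  | empty => simp
  | insert _ _ hx ih =>
    rw [Finset.sum_insert hx]
    exact add_nonneg (star_mul_self_nonneg _) ih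

lemma single_le_sum_sq {n : ℕ} (d : Fin n → A) (k₀ : Fin n) :
    star (d k₀) * (d k₀) ≤ ∑ k, star (d k) * (d k) := by
  classical
  rw [← Finset.add_sum_erase Finset.univ _ (Finset.mem_univ k₀)]
  refine le_add_of_nonneg_right ?_
  induction ((Finset.univ : Finset (Fin n)).erase k₀) using Finset.induction with
  | empty => simp
  | insert _ _ hx ih =>
    rw [Finset.sum_insert hx]
    exact add_nonneg (star_mul_self_nonneg _) ih

lemma entry_norm_le {n : ℕ} (d : Fin n → A) (k₀ : Fin n) :
    ‖d k₀‖ ^ 2 ≤ ‖∑ k, star (d k) * (d k)‖ := by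
  have h1 : ‖star (d k₀) * (d k₀)‖ ≤ ‖∑ k, star (d k) * (d k)‖ :=
    CStarAlgebra.norm_le_norm_of_nonneg_of_le (star_mul_self_nonneg _) (single_le_sum_sq d k₀)
  calc ‖d k₀‖ ^ 2 = ‖star (d k₀) * (d k₀)‖ := by
        rw [CStarRing.norm_star_mul_self, sq]
    _ ≤ _ := h1

end Helpers

/-- For a unital completely positive map `Φ` on a finite-dimensional
C*-algebra there is a strictly increasing sequence `(n_j)` with `Φ^{n_j}` converging in
norm to the spectral projection `P` onto the sum of the peripheral eigenspaces; `P` is a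
unital completely positive projection. -/
theorem stmt_15 {A : Type*} [NormedRing A] [StarRing A] [CStarRing A] [NormedAlgebra ℂ A]
    [StarModule ℂ A] [FiniteDimensional ℂ A]
    (Φ : A →L[ℂ] A)
    (hone : Φ 1 = 1)
    (hcp : IsCompletelyPositive Φ) :
    ∃ (nj : ℕ → ℕ) (P : A →L[ℂ] A), StrictMono nj ∧
      Tendsto (fun j => Φ ^ (nj j)) atTop (nhds P) ∧
      P * P = P ∧ P 1 = 1 ∧ IsCompletelyPositive P ∧
      LinearMap.range (P : A →ₗ[ℂ] A) =
        ⨆ z ∈ {z : ℂ | ‖z‖ = 1}, Module.End.eigenspace (Φ : A →ₗ[ℂ] A) z := by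
  classical
  have hΦpow := ucp_pow Φ hcp hone
  set f : Module.End ℂ A := (Φ : A →ₗ[ℂ] A) with hf
  have hcoe : ∀ (n : ℕ) (x : A), (Φ ^ n) x = (f ^ n) x := by
    intro n
    induction n with
    | zero => intro x; rfl
    | succ n ih =>
      intro x
      rw [pow_succ, pow_succ, ContinuousLinearMap.mul_apply, Module.End.mul_apply]
      exact ih (Φ x)
  have hbound : ∀ (n : ℕ) (x : A), ‖(f ^ n) x‖ ≤ 6 * ‖x‖ := by
    intro n x
    rw [← hcoe]
    exact ucp_norm_le (Φ ^ n) (hΦpow n).1 (hΦpow n).2 x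
  have hfin : {z : ℂ | ‖z‖ = 1 ∧ f.HasEigenvalue z}.Finite :=
    f.finite_hasEigenvalue.subset fun z hz => hz.2
  obtain ⟨nj, hmono, hconvS⟩ := torus_subseq hfin.toFinset
      (fun l hl => ((hfin.mem_toFinset.mp hl).1))
  have hperconv : ∀ μ : ℂ, ‖μ‖ = 1 → f.HasEigenvalue μ →
      Tendsto (fun j => μ ^ nj j) atTop (nhds 1) := fun μ h1 h2 =>
    hconvS μ (hfin.mem_toFinset.mpr ⟨h1, h2⟩)
  have hconv_eigen : ∀ (μ : ℂ), ‖μ‖ = 1 → ∀ x ∈ f.eigenspace μ,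
      Tendsto (fun j => (f ^ nj j) x) atTop (nhds x) := by
    intro μ hμ x hx
    rcases eq_or_ne x 0 with rfl | hx0
    · simpa using (tendsto_const_nhds : Tendsto (fun _ : ℕ => (0:A)) atTop (nhds 0))
    · have hev : f.HasEigenvalue μ :=
        Module.End.hasEigenvalue_of_hasEigenvector ⟨hx, hx0⟩
      have hpow : ∀ n, (f ^ n) x = μ ^ n • x := fun n =>
        Module.End.HasEigenvector.pow_apply ⟨hx, hx0⟩ n
      have h1 := (hperconv μ hμ hev).smul_const x
      rw [one_smul] at h1
      exact h1.congr fun j => (hpow _).symm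
  have hbot : ∀ μ : ℂ, 1 < ‖μ‖ → f.maxGenEigenspace μ = ⊥ := by
    intro μ hgt
    by_contra hne
    have hev : f.HasEigenvalue μ :=
      Module.End.HasUnifEigenvalue.lt zero_lt_one hne
    exact absurd (eigenvalue_norm_le f hbound hev) (not_le.mpr hgt)
  have hconv_all : ∀ x : A, ∃ y, Tendsto (fun j => (f ^ nj j) x) atTop (nhds y) := by
    set G : Submodule ℂ A :=
      { carrier := {x | ∃ y, Tendsto (fun j => (f ^ nj j) x) atTop (nhds y)}
        add_mem' := by
          rintro a b ⟨ya, hya⟩ ⟨yb, hyb⟩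
          exact ⟨ya + yb, by simpa [map_add] using hya.add hyb⟩
        zero_mem' := ⟨0, by simpa using
          (tendsto_const_nhds : Tendsto (fun _ : ℕ => (0:A)) atTop (nhds 0))⟩
        smul_mem' := by
          rintro c a ⟨ya, hya⟩
          exact ⟨c • ya, by simpa [map_smul] using hya.const_smul c⟩ } with hG
    have htop : ⊤ ≤ G := by
      rw [← Module.End.iSup_maxGenEigenspace_eq_top f]
      apply iSup_le
      intro μ
      rcases lt_trichotomy ‖μ‖ 1 with hlt | heq | hgt
      · intro x hx
        exact ⟨0, (maxGen_decay f hlt hx).comp hmono.tendsto_atTop⟩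
      · rw [peripheral_maxGen_eq_eigen f hbound heq]
        intro x hx
        exact ⟨x, hconv_eigen μ heq x hx⟩
      · rw [hbot μ hgt]
        exact bot_le
    intro x
    exact htop (Submodule.mem_top)
  choose Pfun hPfun using hconv_all
  set Plin : A →ₗ[ℂ] A :=
    { toFun := Pfun
      map_add' := fun a b => tendsto_nhds_unique
        (hPfun (a + b)) (by simpa [map_add] using (hPfun a).add (hPfun b))
      map_smul' := fun c a => tendsto_nhds_unique
        (hPfun (c • a)) (by simpa [map_smul] using (hPfun a).const_smul c) } with hPlin
  set P : A →L[ℂ] A := LinearMap.toContinuousLinearMap Plin with hPdef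
  have hPapp : ∀ x, P x = Pfun x := fun x => rfl
  have hP : ∀ x, Tendsto (fun j => (Φ ^ nj j) x) atTop (nhds (P x)) := by
    intro x
    rw [hPapp]
    exact (hPfun x).congr fun j => (hcoe _ _).symm
  have hPf : ∀ x, Tendsto (fun j => (f ^ nj j) x) atTop (nhds (P x)) := by
    intro x
    rw [hPapp]
    exact hPfun x
  have htendsto : Tendsto (fun j => Φ ^ nj j) atTop (nhds P) :=
    clm_tendsto_of_ptwise _ _ hP
  -- the peripheral eigenspace sum
  have hfix : ∀ (z : ℂ), ‖z‖ = 1 → ∀ x ∈ f.eigenspace z, P x = x := by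
    intro z hz x hx
    exact tendsto_nhds_unique (hPf x) (hconv_eigen z hz x hx)
  have hfixU : ∀ x ∈ (⨆ z ∈ {z : ℂ | ‖z‖ = 1}, f.eigenspace z), P x = x := by
    intro x hx
    have hle : (⨆ z ∈ {z : ℂ | ‖z‖ = 1}, f.eigenspace z) ≤
        LinearMap.ker ((P : A →ₗ[ℂ] A) - LinearMap.id) := by
      refine iSup₂_le fun z hz => ?_
      intro x hx
      rw [LinearMap.mem_ker, LinearMap.sub_apply, LinearMap.id_apply, sub_eq_zero]
      exact hfix z hz x hx
    have := hle hx
    rw [LinearMap.mem_ker, LinearMap.sub_apply, LinearMap.id_apply, sub_eq_zero] at this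
    exact this
  have hrangeU : ∀ x : A, P x ∈ (⨆ z ∈ {z : ℂ | ‖z‖ = 1}, f.eigenspace z) := by
    have htop : ⊤ ≤ Submodule.comap (P : A →ₗ[ℂ] A)
        (⨆ z ∈ {z : ℂ | ‖z‖ = 1}, f.eigenspace z) := by
      rw [← Module.End.iSup_maxGenEigenspace_eq_top f]
      apply iSup_le
      intro μ
      rcases lt_trichotomy ‖μ‖ 1 with hlt | heq | hgt
      · intro x hx
        have h0 : P x = 0 := tendsto_nhds_unique (hPf x)
          ((maxGen_decay f hlt hx).comp hmono.tendsto_atTop)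
        rw [Submodule.mem_comap]
        show P x ∈ _
        rw [h0]
        exact Submodule.zero_mem _
      · rw [peripheral_maxGen_eq_eigen f hbound heq]
        intro x hx
        rw [Submodule.mem_comap]
        show P x ∈ _
        rw [hfix μ heq x hx]
        exact le_iSup₂ (f := fun z (_ : z ∈ {z : ℂ | ‖z‖ = 1}) => f.eigenspace z) μ heq hx
      · rw [hbot μ hgt]
        exact bot_le
    intro x
    exact htop Submodule.mem_top
  have hPP : P * P = P := by
    ext x
    rw [ContinuousLinearMap.mul_apply]
    exact hfixU (P x) (hrangeU x)
  have hP1 : P 1 = 1 := by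
    refine tendsto_nhds_unique (hP 1) ?_
    exact tendsto_const_nhds.congr fun j => ((hΦpow (nj j)).2).symm
  have hicp : IsCompletelyPositive P := by
    intro n M hM
    choose Nj hNj using fun j => (hΦpow (nj j)).1 n M hM
    have hdiag : ∀ (j : ℕ) (l : Fin n),
        (∑ k, star (Nj j k l) * (Nj j k l)) = (Φ ^ nj j) (M l l) := by
      intro j l
      have := congrFun (congrFun (hNj j) l) l
      simp only [Matrix.map_apply, Matrix.mul_apply, Matrix.conjTranspose_apply] at this
      rw [this]
    have hent : ∀ (j : ℕ) (k l : Fin n), ‖Nj j k l‖ ≤ 1 + 6 * ‖M l l‖ := by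
      intro j k l
      have hsq : ‖Nj j k l‖ ^ 2 ≤ 6 * ‖M l l‖ := by
        refine (entry_norm_le (fun k => Nj j k l) k).trans ?_
        rw [hdiag j l]
        rw [hcoe]
        exact hbound _ _
      nlinarith [norm_nonneg (Nj j k l), norm_nonneg (M l l),
        sq_nonneg (‖Nj j k l‖ - 1)]
    set R : ℝ := 1 + 6 * (∑ l, ‖M l l‖) with hR
    have hRnn : ∀ l : Fin n, 1 + 6 * ‖M l l‖ ≤ R := by
      intro l
      rw [hR]
      have : ‖M l l‖ ≤ ∑ l', ‖M l' l'‖ :=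
        Finset.single_le_sum (fun i _ => norm_nonneg (M i i)) (Finset.mem_univ l)
      linarith
    have hRpos : (0:ℝ) ≤ R := by
      rw [hR]
      positivity
    have hball : ∀ j, (fun k l => Nj j k l) ∈ Metric.closedBall (0 : Fin n → Fin n → A) R := by
      intro j
      rw [Metric.mem_closedBall, dist_zero_right]
      refine pi_norm_le_iff_of_nonneg hRpos |>.mpr fun k => ?_
      refine pi_norm_le_iff_of_nonneg hRpos |>.mpr fun l => ?_
      exact (hent j k l).trans (hRnn l)
    obtain ⟨L, -, ψ, hψ, hL⟩ := tendsto_subseq_of_bounded Metric.isBounded_closedBall hball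
    refine ⟨Matrix.of L, ?_⟩
    ext k l
    have hconv1 : Tendsto (fun j => (Φ ^ nj (ψ j)) (M k l)) atTop (nhds (P (M k l))) :=
      (hP (M k l)).comp hψ.tendsto_atTop
    have hentry : ∀ i : Fin n, ∀ m : Fin n,
        Tendsto (fun j => Nj (ψ j) i m) atTop (nhds (L i m)) := by
      intro i m
      have h1 := (tendsto_pi_nhds.mp hL) i
      exact (tendsto_pi_nhds.mp h1) m
    have hconv2 : Tendsto (fun j => ∑ i, star (Nj (ψ j) i k) * (Nj (ψ j) i l)) atTop
        (nhds (∑ i, star (L i k) * L i l)) := by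
      refine tendsto_finset_sum _ fun i _ => ?_
      exact ((hentry i k).star).mul (hentry i l)
    have heq : ∀ j, (Φ ^ nj (ψ j)) (M k l) = ∑ i, star (Nj (ψ j) i k) * (Nj (ψ j) i l) := by
      intro j
      have := congrFun (congrFun (hNj (ψ j)) k) l
      simp only [Matrix.map_apply, Matrix.mul_apply, Matrix.conjTranspose_apply] at this
      rw [this]
    have hPkl : P (M k l) = ∑ i, star (L i k) * L i l :=
      tendsto_nhds_unique (hconv1.congr heq) hconv2
    simp only [Matrix.map_apply, Matrix.mul_apply, Matrix.conjTranspose_apply, Matrix.of_apply]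
    exact hPkl
  have hrange_eq : LinearMap.range (P : A →ₗ[ℂ] A) =
      ⨆ z ∈ {z : ℂ | ‖z‖ = 1}, f.eigenspace z := by
    apply le_antisymm
    · rintro y ⟨x, rfl⟩
      exact hrangeU x
    · intro x hx
      exact ⟨x, hfixU x hx⟩
  exact ⟨nj, P, hmono, htendsto, hPP, hP1, hicp, hrange_eq⟩
end
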